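/- Let c ∈ ℝ^d_{>0}, let Γ ⊂ ℤ^d_{≥0} with normalizing constant Z_Γ = Σ_{x∈Γ} Π_i c_i^{x_i} e^{−c_i}/x_i! finite and positive, and define π_Γ(x) = (1/Z_Γ) Π_i c_i^{x_i} e^{−c_i}/x_i! for x ∈ Γ. Suppose the mass-action stochastic system is complex balanced at c, i.e., for every complex z, Σ_{k: ν'_k = z} κ_k c^{ν_k} = Σ_{k: ν_k = z} κ_k c^{ν_k}. Then π_Γ satisfies the stationarity equation Σ_k π_Γ(x − ζ_k)λ_k(x − ζ_k) = π_Γ(x) Σ_k λ_k(x) for all x ∈ Γ, where λ_k(x) = κ_k Π_i x_i!/(x_i − ν_{ki})! · 1{x_i ≥ ν_{ki}} and ζ_k = ν'_k − ν_k, with π_Γ(x − ζ_k) = 0 when x − ζ_k ∉ Γ. -/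

import Mathlib

open scoped Classical
open Real

lemma ack_prod_desc (n a : ℕ) (h : a ≤ n) :
    ∏ j ∈ Finset.range a, ((n : ℝ) - j) =
      (Nat.factorial n : ℝ) / (Nat.factorial (n - a)) := by
  induction a with
  | zero =>
    simp [div_self, Nat.cast_ne_zero.mpr (Nat.factorial_ne_zero n)]
  | succ a ih =>
    have ha : a ≤ n := Nat.le_of_succ_le h
    rw [Finset.prod_range_succ, ih ha]
    obtain ⟨s, rfl⟩ : ∃ s, n = s + (a + 1) := ⟨n - (a + 1), by omega⟩
    have e1 : s + (a + 1) - a = s + 1 := by omega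
    have e2 : s + (a + 1) - (a + 1) = s := by omega
    rw [e1, e2, Nat.factorial_succ]
    have h1 : ((Nat.factorial s : ℝ)) ≠ 0 := by exact_mod_cast Nat.factorial_ne_zero _
    have h2 : ((s : ℝ) + 1) ≠ 0 := by positivity
    push_cast
    field_simp
    ring

lemma ack_prod_zero (t : ℤ) (z : ℕ) (h0 : 0 ≤ t) (h : t < z) :
    ∏ j ∈ Finset.range z, ((t : ℝ) - j) = 0 := by
  apply Finset.prod_eq_zero (i := t.toNat) (Finset.mem_range.mpr (by omega))
  have : ((t.toNat : ℕ) : ℝ) = ((t : ℤ) : ℝ) := by exact_mod_cast Int.toNat_of_nonneg h0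
  rw [this, sub_self]

lemma ack_key (c : ℝ) (hc : 0 < c) (n a b : ℕ) (h : b ≤ n) :
    (c ^ (n - b + a) * Real.exp (-c) / (Nat.factorial (n - b + a))) *
      (∏ j ∈ Finset.range a, (((n - b + a : ℕ) : ℝ) - j)) =
    (c ^ n * Real.exp (-c) / (Nat.factorial n)) * (c ^ a / c ^ b) *
      (∏ j ∈ Finset.range b, ((n : ℝ) - j)) := by
  rw [ack_prod_desc (n - b + a) a (by omega), ack_prod_desc n b h]
  obtain ⟨q, rfl⟩ : ∃ q, n = q + b := ⟨n - b, by omega⟩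
  simp only [show q + b - b + a = q + a from by omega, show q + b - b = q from by omega,
    show q + b - b + a - a = q from by omega, show q + a - a = q from by omega]
  have hcne : c ≠ 0 := ne_of_gt hc
  have h1 : ((Nat.factorial (q + a) : ℝ)) ≠ 0 := by exact_mod_cast Nat.factorial_ne_zero _
  have h2 : ((Nat.factorial (q + b) : ℝ)) ≠ 0 := by exact_mod_cast Nat.factorial_ne_zero _
  have h3 : ((Nat.factorial q : ℝ)) ≠ 0 := by exact_mod_cast Nat.factorial_ne_zero _
  rw [pow_add, pow_add]
  field_simp

/-- Anderson–Craciun–Kurtz: for a mass-action reaction network that is complex balanced at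
`c`, the product-form Poisson distribution restricted to a closed irreducible component `Γ`
of the state space satisfies the stationarity equation of the chemical master equation. -/
theorem stmt_6 (d m : ℕ)
    (ν ν' : Fin m → Fin d → ℕ)                          -- source and product complexes
    (κ : Fin m → ℝ) (hκ : ∀ k, 0 < κ k)                 -- rate constants
    (ζ : Fin m → Fin d → ℤ) (hζ : ∀ k i, ζ k i = (ν' k i : ℤ) - (ν k i : ℤ))
    (lam : Fin m → (Fin d → ℤ) → ℝ)                     -- stochastic mass-action intensities
    (hlam : ∀ k x, lam k x =
      κ k * ∏ i, (if (ν k i : ℤ) ≤ x i then ∏ j ∈ Finset.range (ν k i), ((x i : ℝ) - j) else 0))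
    (c : Fin d → ℝ) (hc : ∀ i, 0 < c i)
    -- complex balance of c: for every complex z, inflow equals outflow
    (hcb : ∀ z : Fin d → ℕ,
      ∑ k ∈ Finset.univ.filter (fun k => ν' k = z), κ k * ∏ i, c i ^ ν k i =
      ∑ k ∈ Finset.univ.filter (fun k => ν k = z), κ k * ∏ i, c i ^ ν k i)
    (Γ : Set (Fin d → ℤ)) (hΓnn : ∀ x ∈ Γ, ∀ i, 0 ≤ x i)
    -- Γ is a closed (irreducible) component: both Γ and its complement are closed under
    -- the transitions of the chain
    (hclosed : ∀ x ∈ Γ, ∀ k, lam k x ≠ 0 → (x + ζ k) ∈ Γ)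
    (hclosed' : ∀ x : Fin d → ℤ, (∀ i, 0 ≤ x i) → x ∉ Γ → ∀ k, lam k x ≠ 0 → (x + ζ k) ∉ Γ)
    (ZΓ : ℝ)
    (hZΓ : ZΓ = ∑' x : Γ, ∏ i, c i ^ ((x : Fin d → ℤ) i).toNat * Real.exp (-c i) /
      (Nat.factorial ((x : Fin d → ℤ) i).toNat))
    (hZfin : Summable (fun x : Γ => ∏ i, c i ^ ((x : Fin d → ℤ) i).toNat * Real.exp (-c i) /
      (Nat.factorial ((x : Fin d → ℤ) i).toNat)))
    (hZpos : 0 < ZΓ)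
    (πΓ : (Fin d → ℤ) → ℝ)
    (hπ : ∀ x, πΓ x = if x ∈ Γ then
      (1 / ZΓ) * ∏ i, c i ^ (x i).toNat * Real.exp (-c i) / (Nat.factorial (x i).toNat)
      else 0) :
    ∀ x ∈ Γ, ∑ k, πΓ (x - ζ k) * lam k (x - ζ k) = πΓ x * ∑ k, lam k x := by
  classical
  -- rewrite of the intensity at nonnegative states: the indicator is redundant
  have hlam' : ∀ (k : Fin m) (y : Fin d → ℤ), (∀ i, 0 ≤ y i) →
      lam k y = κ k * ∏ i, ∏ j ∈ Finset.range (ν k i), ((y i : ℝ) - j) := by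
    intro k y hy
    rw [hlam]
    congr 1
    refine Finset.prod_congr rfl (fun i _ => ?_)
    by_cases h : (ν k i : ℤ) ≤ y i
    · rw [if_pos h]
    · rw [if_neg h]
      exact (ack_prod_zero (y i) (ν k i) (hy i) (by omega)).symm
  have hlampos : ∀ (k : Fin m) (y : Fin d → ℤ), (∀ i, (ν k i : ℤ) ≤ y i) → 0 < lam k y := by
    intro k y h
    have hy : ∀ i, 0 ≤ y i := fun i => le_trans (Int.ofNat_nonneg _) (h i)
    rw [hlam' k y hy]
    refine mul_pos (hκ k) (Finset.prod_pos (fun i _ => Finset.prod_pos (fun j hj => ?_)))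
    have hj' : j < ν k i := Finset.mem_range.mp hj
    have h1 : (j : ℤ) < y i := by have := h i; omega
    have h2 : (j : ℝ) < ((y i : ℤ) : ℝ) := by exact_mod_cast h1
    linarith
  intro x hx
  have hxnn := hΓnn x hx
  set F : (Fin d → ℕ) → ℝ := fun z => ∏ i, ∏ j ∈ Finset.range (z i), ((x i : ℝ) - j) with hF
  set G : (Fin d → ℕ) → ℝ := fun z => πΓ x * (∏ i, c i ^ z i)⁻¹ * F z with hG
  -- per-reaction identities
  have mainR : ∀ k, πΓ x * lam k x = (κ k * ∏ i, c i ^ ν k i) * G (ν k) := by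
    intro k
    rw [hlam' k x hxnn]
    simp only [hG, hF]
    have hne : (∏ i, c i ^ ν k i) ≠ 0 :=
      Finset.prod_ne_zero_iff.mpr (fun i _ => pow_ne_zero _ (ne_of_gt (hc i)))
    field_simp
  have mainL : ∀ k, πΓ (x - ζ k) * lam k (x - ζ k)
      = (κ k * ∏ i, c i ^ ν k i) * G (ν' k) := by
    intro k
    set y : Fin d → ℤ := x - ζ k with hy
    have hyi : ∀ i, y i = x i - ν' k i + ν k i := by
      intro i
      simp only [hy, Pi.sub_apply, hζ k i]
      ring
    by_cases hcase : ∀ i, (ν k i : ℤ) ≤ y i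
    · -- the source state is admissible, hence in Γ
      have hynn : ∀ i, 0 ≤ y i := fun i => le_trans (Int.ofNat_nonneg _) (hcase i)
      have hlamne : lam k y ≠ 0 := ne_of_gt (hlampos k y hcase)
      have hyΓ : y ∈ Γ := by
        by_contra h
        refine hclosed' y hynn h k hlamne ?_
        have : y + ζ k = x := by
          funext i
          simp only [hy, Pi.add_apply, Pi.sub_apply]
          ring
        rw [this]; exact hx
      simp only [hG, hF]
      rw [hπ y, if_pos hyΓ, hπ x, if_pos hx, hlam' k y hynn]
      have hper : ∀ i ∈ Finset.univ,
          (c i ^ (y i).toNat * Real.exp (-c i) / (Nat.factorial (y i).toNat)) *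
            (∏ j ∈ Finset.range (ν k i), ((y i : ℝ) - j))
          = ((c i ^ ν k i * (c i ^ ν' k i)⁻¹) *
            ((c i ^ (x i).toNat * Real.exp (-c i) / (Nat.factorial (x i).toNat)) *
              (∏ j ∈ Finset.range (ν' k i), ((x i : ℝ) - j)))) := by
        intro i _
        set n := (x i).toNat with hn
        have hxin : (x i : ℤ) = (n : ℤ) := by
          have := hxnn i; omega
        have hbn : ν' k i ≤ n := by
          have h1 := hcase i
          have h2 := hyi i
          omega
        have hyt : (y i).toNat = n - ν' k i + ν k i := by
          have h1 := hyi i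
          have h2 := hxnn i
          omega
        have hyc : ((y i : ℤ) : ℝ) = ((n - ν' k i + ν k i : ℕ) : ℝ) := by
          have h1 := hyi i
          have : (y i : ℤ) = ((n - ν' k i + ν k i : ℕ) : ℤ) := by omega
          exact_mod_cast congrArg (fun t : ℤ => (t : ℝ)) this
        have hxc : ((x i : ℤ) : ℝ) = (n : ℝ) := by exact_mod_cast congrArg (fun t : ℤ => (t : ℝ)) hxin
        rw [hyt, hyc, hxc]
        have := ack_key (c i) (hc i) n (ν k i) (ν' k i) hbn
        linear_combination this
      calc (1 / ZΓ * ∏ i, c i ^ (y i).toNat * Real.exp (-c i) / (Nat.factorial (y i).toNat)) *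
            (κ k * ∏ i, ∏ j ∈ Finset.range (ν k i), ((y i : ℝ) - j))
          = (1 / ZΓ) * κ k * ∏ i,
              ((c i ^ (y i).toNat * Real.exp (-c i) / (Nat.factorial (y i).toNat)) *
                (∏ j ∈ Finset.range (ν k i), ((y i : ℝ) - j))) := by
            rw [Finset.prod_mul_distrib]; ring
        _ = (1 / ZΓ) * κ k * ∏ i,
              ((c i ^ ν k i * (c i ^ ν' k i)⁻¹) *
                ((c i ^ (x i).toNat * Real.exp (-c i) / (Nat.factorial (x i).toNat)) *
                  (∏ j ∈ Finset.range (ν' k i), ((x i : ℝ) - j)))) := by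
            rw [Finset.prod_congr rfl hper]
        _ = (κ k * ∏ i, c i ^ ν k i) *
              (1 / ZΓ * (∏ i, c i ^ (x i).toNat * Real.exp (-c i) / (Nat.factorial (x i).toNat)) *
                (∏ i, c i ^ ν' k i)⁻¹ * ∏ i, ∏ j ∈ Finset.range (ν' k i), ((x i : ℝ) - j)) := by
            rw [Finset.prod_mul_distrib, Finset.prod_mul_distrib, Finset.prod_mul_distrib,
              Finset.prod_inv_distrib]
            ring
    · -- some coordinate is infeasible: both sides vanish
      push_neg at hcase
      obtain ⟨i0, hi0⟩ := hcase
      have hlamz : lam k y = 0 := by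
        rw [hlam]
        refine mul_eq_zero_of_right _ ?_
        exact Finset.prod_eq_zero (Finset.mem_univ i0) (if_neg (not_le.mpr hi0))
      have hFz : F (ν' k) = 0 := by
        rw [hF]
        refine Finset.prod_eq_zero (Finset.mem_univ i0) ?_
        have h1 := hyi i0
        exact ack_prod_zero (x i0) (ν' k i0) (hxnn i0) (by omega)
      rw [hlamz]
      simp only [hG]
      rw [hFz]
      ring
  -- regroup sums over reactions by their complexes and apply complex balance
  have regroup : ∀ (f : Fin m → Fin d → ℕ) (t : Finset (Fin d → ℕ)), (∀ k, f k ∈ t) →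
      ∑ k, (κ k * ∏ i, c i ^ ν k i) * G (f k)
        = ∑ z ∈ t, (∑ k ∈ Finset.univ.filter (fun k => f k = z),
            κ k * ∏ i, c i ^ ν k i) * G z := by
    intro f t ht
    rw [← Finset.sum_fiberwise_of_maps_to (fun k _ => ht k)
      (fun k => (κ k * ∏ i, c i ^ ν k i) * G (f k))]
    refine Finset.sum_congr rfl (fun z _ => ?_)
    rw [Finset.sum_mul]
    refine Finset.sum_congr rfl (fun k hk => ?_)
    rw [(Finset.mem_filter.mp hk).2]
  set t : Finset (Fin d → ℕ) :=
    (Finset.univ.image ν') ∪ (Finset.univ.image ν) with ht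
  have ht' : ∀ k, ν' k ∈ t := fun k =>
    Finset.mem_union_left _ (Finset.mem_image_of_mem _ (Finset.mem_univ k))
  have ht'' : ∀ k, ν k ∈ t := fun k =>
    Finset.mem_union_right _ (Finset.mem_image_of_mem _ (Finset.mem_univ k))
  calc ∑ k, πΓ (x - ζ k) * lam k (x - ζ k)
      = ∑ k, (κ k * ∏ i, c i ^ ν k i) * G (ν' k) := Finset.sum_congr rfl (fun k _ => mainL k)
    _ = ∑ z ∈ t, (∑ k ∈ Finset.univ.filter (fun k => ν' k = z),
          κ k * ∏ i, c i ^ ν k i) * G z := regroup ν' t ht'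
    _ = ∑ z ∈ t, (∑ k ∈ Finset.univ.filter (fun k => ν k = z),
          κ k * ∏ i, c i ^ ν k i) * G z := by
        refine Finset.sum_congr rfl (fun z _ => ?_)
        rw [hcb z]
    _ = ∑ k, (κ k * ∏ i, c i ^ ν k i) * G (ν k) := (regroup ν t ht'').symm
    _ = ∑ k, πΓ x * lam k x := Finset.sum_congr rfl (fun k _ => (mainR k).symm)
    _ = πΓ x * ∑ k, lam k x := by rw [Finset.mul_sum]
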